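/- Let V be a real four-dimensional oriented inner product space, with induced inner product and Hodge star on Λ²V, so that Λ²V = Λ⁺ ⊕ Λ⁻ splits into self-dual and anti-self-dual parts, and let dvol ∈ Λ⁴V be the volume element. Let θ ∈ Λ⁺ satisfy θ ∧ θ = dvol, and let ρ₁, ρ₂ ∈ Λ²V satisfy ρᵢ ∧ ρᵢ = dvol and ρᵢ⁺ = λᵢ θ with λᵢ ≥ 1 for i = 1,2. Then (ρ₁ − ρ₂) ∧ (ρ₁ − ρ₂) ≤ 0 (i.e. it is a nonpositive multiple of dvol), and (ρ₁ − ρ₂) ∧ (ρ₁ − ρ₂) = 0 if and only if ρ₁ = ρ₂. -/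

import Mathlib

set_option maxHeartbeats 800000


/-- **Negative chords** (Lemma 2.2).  `W` plays the role of `Λ²V` for a real
four-dimensional oriented inner product space `V` (so `W` is six-dimensional),
`star` is the Hodge star operator on `Λ²V` (a self-adjoint involution, whose
`±1` eigenspaces are the self-dual and anti-self-dual forms), and `w α β` is
the wedge product `α ∧ β` measured in multiples of the volume element
`dvol ∈ Λ⁴V`, i.e. `α ∧ β = w α β · dvol`; it satisfies `w α β = ⟨α, star β⟩`.
The self-dual part of `ω` is `ω⁺ = (ω + star ω)/2`.
If `θ ∈ Λ⁺` satisfies `θ ∧ θ = dvol` and `ρ₁, ρ₂ ∈ Λ²V` satisfy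
`ρᵢ ∧ ρᵢ = dvol` and `ρᵢ⁺ = λᵢ θ` with `λᵢ ≥ 1`, then
`(ρ₁ − ρ₂) ∧ (ρ₁ − ρ₂) ≤ 0`, with equality if and only if `ρ₁ = ρ₂`. -/
theorem negative_chords
    (W : Type*) [NormedAddCommGroup W] [InnerProductSpace ℝ W]
    (hdim : Module.finrank ℝ W = 6)
    (star : W →ₗ[ℝ] W)
    (hinv : ∀ ω, star (star ω) = ω)
    (hsa : ∀ α β : W, (inner ℝ (star α) β : ℝ) = (inner ℝ α (star β) : ℝ))
    (w : W → W → ℝ)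
    (hw : ∀ α β : W, w α β = (inner ℝ α (star β) : ℝ))
    (θ ρ₁ ρ₂ : W) (l₁ l₂ : ℝ)
    (hθsd : star θ = θ) (hθ : w θ θ = 1)
    (h₁ : w ρ₁ ρ₁ = 1) (h₂ : w ρ₂ ρ₂ = 1)
    (hp₁ : (2⁻¹ : ℝ) • (ρ₁ + star ρ₁) = l₁ • θ) (hl₁ : 1 ≤ l₁)
    (hp₂ : (2⁻¹ : ℝ) • (ρ₂ + star ρ₂) = l₂ • θ) (hl₂ : 1 ≤ l₂) :
    w (ρ₁ - ρ₂) (ρ₁ - ρ₂) ≤ 0 ∧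
      (w (ρ₁ - ρ₂) (ρ₁ - ρ₂) = 0 ↔ ρ₁ = ρ₂) := by
  -- anti-self-dual parts
  obtain ⟨σ₁, hσ₁def⟩ : ∃ s : W, s = ρ₁ - l₁ • θ := ⟨_, rfl⟩
  obtain ⟨σ₂, hσ₂def⟩ : ∃ s : W, s = ρ₂ - l₂ • θ := ⟨_, rfl⟩
  have hρa : ρ₁ = l₁ • θ + σ₁ := by rw [hσ₁def]; abel
  have hρb : ρ₂ = l₂ • θ + σ₂ := by rw [hσ₂def]; abel
  have hsρ₁ : star ρ₁ = (2 * l₁) • θ - ρ₁ := by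
    linear_combination (norm := module) (2:ℝ) • hp₁
  have hsρ₂ : star ρ₂ = (2 * l₂) • θ - ρ₂ := by
    linear_combination (norm := module) (2:ℝ) • hp₂
  have hs₁ : star σ₁ = -σ₁ := by
    rw [hσ₁def, map_sub, map_smul, hsρ₁, hθsd]; module
  have hs₂ : star σ₂ = -σ₂ := by
    rw [hσ₂def, map_sub, map_smul, hsρ₂, hθsd]; module
  have hθθ : (inner ℝ θ θ : ℝ) = 1 := by rw [hw, hθsd] at hθ; exact hθ
  have hθσ₁ : (inner ℝ θ σ₁ : ℝ) = 0 := by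
    have h := hsa θ σ₁
    rw [hθsd, hs₁, inner_neg_right] at h
    linarith
  have hθσ₂ : (inner ℝ θ σ₂ : ℝ) = 0 := by
    have h := hsa θ σ₂
    rw [hθsd, hs₂, inner_neg_right] at h
    linarith
  have hσ₁θ : (inner ℝ σ₁ θ : ℝ) = 0 := by rw [real_inner_comm]; exact hθσ₁
  have hσ₂θ : (inner ℝ σ₂ θ : ℝ) = 0 := by rw [real_inner_comm]; exact hθσ₂
  have e₁ : (inner ℝ σ₁ σ₁ : ℝ) = l₁ ^ 2 - 1 := by
    rw [hw] at h₁
    rw [hρa] at h₁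
    rw [map_add, map_smul, hθsd, hs₁] at h₁
    simp only [inner_add_left, inner_add_right, inner_smul_left, inner_smul_right,
      inner_neg_right, hθθ, hθσ₁, hσ₁θ, RCLike.ofReal_real_eq_id, id_eq] at h₁
    simp only [starRingEnd_apply, star_trivial] at h₁
    nlinarith [h₁]
  have e₂ : (inner ℝ σ₂ σ₂ : ℝ) = l₂ ^ 2 - 1 := by
    rw [hw] at h₂
    rw [hρb] at h₂
    rw [map_add, map_smul, hθsd, hs₂] at h₂
    simp only [inner_add_left, inner_add_right, inner_smul_left, inner_smul_right,
      inner_neg_right, hθθ, hθσ₂, hσ₂θ, RCLike.ofReal_real_eq_id, id_eq] at h₂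
    simp only [starRingEnd_apply, star_trivial] at h₂
    nlinarith [h₂]
  obtain ⟨t, htdef⟩ : ∃ t : ℝ, t = (inner ℝ σ₁ σ₂ : ℝ) := ⟨_, rfl⟩
  -- main computation of the wedge number
  have E : w (ρ₁ - ρ₂) (ρ₁ - ρ₂) = 2 * (1 - l₁ * l₂ + t) := by
    rw [hw, hρa, hρb]
    rw [show l₁ • θ + σ₁ - (l₂ • θ + σ₂) = (l₁ - l₂) • θ + (σ₁ - σ₂) by module]
    rw [map_add, map_smul, hθsd, map_sub, hs₁, hs₂]
    simp only [inner_add_left, inner_add_right, inner_smul_left, inner_smul_right,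
      inner_sub_left, inner_sub_right, inner_neg_left, inner_neg_right,
      hθθ, hθσ₁, hθσ₂, hσ₁θ, hσ₂θ, RCLike.ofReal_real_eq_id, id_eq]
    simp only [starRingEnd_apply, star_trivial]
    have hc : (inner ℝ σ₂ σ₁ : ℝ) = t := by rw [htdef, real_inner_comm]
    have hc' : (inner ℝ σ₁ σ₂ : ℝ) = t := by rw [htdef]
    simp only [hc, hc', e₁, e₂]
    ring
  -- Cauchy–Schwarz bound
  have hcs : t ≤ ‖σ₁‖ * ‖σ₂‖ := by rw [htdef]; exact real_inner_le_norm σ₁ σ₂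
  have hn₁ : ‖σ₁‖ ^ 2 = l₁ ^ 2 - 1 := by rw [← real_inner_self_eq_norm_sq]; exact e₁
  have hn₂ : ‖σ₂‖ ^ 2 = l₂ ^ 2 - 1 := by rw [← real_inner_self_eq_norm_sq]; exact e₂
  have hq : (0:ℝ) ≤ l₁ * l₂ - 1 := by nlinarith
  have hpsq : (‖σ₁‖ * ‖σ₂‖) ^ 2 = (l₁ ^ 2 - 1) * (l₂ ^ 2 - 1) := by
    rw [mul_pow, hn₁, hn₂]
  have hple : ‖σ₁‖ * ‖σ₂‖ ≤ l₁ * l₂ - 1 := by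
    nlinarith [mul_nonneg (norm_nonneg σ₁) (norm_nonneg σ₂), sq_nonneg (l₁ - l₂)]
  have hbound : t ≤ l₁ * l₂ - 1 := le_trans hcs hple
  refine ⟨by rw [E]; linarith, ?_, ?_⟩
  · intro h0
    rw [E] at h0
    have ht : t = l₁ * l₂ - 1 := by linarith
    have hpq : ‖σ₁‖ * ‖σ₂‖ = l₁ * l₂ - 1 := le_antisymm hple (ht ▸ hcs)
    have hll : l₁ = l₂ := by
      have h2 : (l₁ - l₂) ^ 2 = 0 := by nlinarith [hpsq, hpq]
      have := pow_eq_zero_iff (n := 2) (by norm_num) |>.mp h2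
      linarith [sub_eq_zero.mp this]
    have hσ : σ₁ = σ₂ := by
      have : (inner ℝ (σ₁ - σ₂) (σ₁ - σ₂) : ℝ) = 0 := by
        simp only [inner_sub_left, inner_sub_right]
        rw [real_inner_comm σ₂ σ₁]
        have hc : (inner ℝ σ₂ σ₁ : ℝ) = t := by rw [htdef, real_inner_comm]
        have hc' : (inner ℝ σ₁ σ₂ : ℝ) = t := by rw [htdef]
        simp only [e₁, e₂, hc, hc', ht, hll]
        ring
      have := inner_self_eq_zero.mp this
      exact sub_eq_zero.mp this
    rw [hρa, hρb, hll, hσ]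
  · intro h; rw [h]; simp [hw]
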